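/- Let f ∈ gl_N be a nilpotent of depth d = 2D (D = p_1 − 1, pyramid setup), and let E = a(f^T)^{D-1} + b(f^T)^D ∈ g_{d-1}, where a ∈ Hom(V[D-1],V[D]) and b ∈ Hom(V[D],V[D-1]). Then the centralizer of E in g_1 is coisotropic with respect to the form ω(x,y) = tr(f[x,y]) if and only if ab = λ·1_{V[D]} for some scalar λ. -/

import Mathlib

open Matrix

/-- Boxes of the symmetric pyramid. -/
abbrev PBox (s : ℕ) (p r : Fin s → ℕ) : Type := Σ i : Fin s, Fin (r i) × Fin (p i)

variable {F : Type*} [Field F]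

/-- The `x`-coordinate (the `ad h` degree) of a box. -/
def pdeg {s : ℕ} {p r : Fin s → ℕ} (b : PBox s p r) : ℤ :=
  (p b.1 : ℤ) - 1 - 2 * (b.2.2 : ℤ)

/-- The left-shift operator `f`. -/
def shiftL {s : ℕ} (p r : Fin s → ℕ) : Matrix (PBox s p r) (PBox s p r) F :=
  fun b' b => if b'.1 = b.1 ∧ (b'.2.1 : ℕ) = (b.2.1 : ℕ) ∧
      (b'.2.2 : ℕ) = (b.2.2 : ℕ) + 1 then 1 else 0

/-- The right-shift operator `fᵀ`. -/
def shiftR {s : ℕ} (p r : Fin s → ℕ) : Matrix (PBox s p r) (PBox s p r) F :=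
  fun b' b => if b'.1 = b.1 ∧ (b'.2.1 : ℕ) = (b.2.1 : ℕ) ∧
      (b'.2.2 : ℕ) + 1 = (b.2.2 : ℕ) then 1 else 0

/-- The projection `1_{V[c]}` onto the `h`-eigenspace of `V` of eigenvalue `c`. -/
def projDeg {s : ℕ} (p r : Fin s → ℕ) (c : ℤ) :
    Matrix (PBox s p r) (PBox s p r) F :=
  fun b' b => if b' = b ∧ pdeg b = c then 1 else 0

namespace CoisoAux

variable {s : ℕ} {p r : Fin s → ℕ}

lemma box_pos (c : PBox s p r) : 0 < p c.1 := lt_of_le_of_lt (Nat.zero_le _) c.2.2.isLt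

/-- replace the column index of a box -/
def bx (c : PBox s p r) (n : ℕ) (h : n < p c.1) : PBox s p r := ⟨c.1, (c.2.1, ⟨n, h⟩)⟩

def col0 (c : PBox s p r) : PBox s p r := bx c 0 (box_pos c)

@[simp] lemma bx_fst (c : PBox s p r) (n h) : (bx c n h).1 = c.1 := rfl
@[simp] lemma bx_row (c : PBox s p r) (n h) : ((bx c n h).2.1 : ℕ) = c.2.1 := rfl
@[simp] lemma bx_col (c : PBox s p r) (n h) : ((bx c n h).2.2 : ℕ) = n := rfl
@[simp] lemma col0_fst (c : PBox s p r) : (col0 c).1 = c.1 := rfl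
@[simp] lemma col0_row (c : PBox s p r) : ((col0 c).2.1 : ℕ) = c.2.1 := rfl
@[simp] lemma col0_col (c : PBox s p r) : ((col0 c).2.2 : ℕ) = 0 := rfl

lemma pbox_eq_iff (c d : PBox s p r) :
    c = d ↔ c.1 = d.1 ∧ (c.2.1 : ℕ) = (d.2.1 : ℕ) ∧ (c.2.2 : ℕ) = (d.2.2 : ℕ) := by
  constructor
  · rintro rfl; exact ⟨rfl, rfl, rfl⟩
  · obtain ⟨i, j, k⟩ := c; obtain ⟨i', j', k'⟩ := d
    rintro ⟨h1, h2, h3⟩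
    dsimp at h1 h2 h3
    subst h1
    simp only [Sigma.mk.inj_iff, heq_eq_eq, Prod.mk.injEq]
    exact ⟨trivial, Fin.ext h2, Fin.ext h3⟩

lemma pdeg_bx (c : PBox s p r) (n h) : pdeg (bx c n h) = (p c.1 : ℤ) - 1 - 2 * n := rfl

lemma pdeg_col0 (c : PBox s p r) : pdeg (col0 c) = (p c.1 : ℤ) - 1 := by
  simp [col0, pdeg_bx]

lemma pdeg_def (c : PBox s p r) : pdeg c = (p c.1 : ℤ) - 1 - 2 * (c.2.2 : ℤ) := rfl

lemma col_lt (c : PBox s p r) : (c.2.2 : ℕ) < p c.1 := c.2.2.isLt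

/-- collapse a sum over boxes with prescribed (row, fixed column) -/
lemma sum_collapse (f : PBox s p r → F) (c : PBox s p r) (n : ℕ) (h : n < p c.1) :
    (∑ e : PBox s p r, if e.1 = c.1 ∧ (e.2.1 : ℕ) = (c.2.1 : ℕ) ∧ (e.2.2 : ℕ) = n
      then f e else 0) = f (bx c n h) := by
  rw [Fintype.sum_eq_single (bx c n h)]
  · have hc : (bx c n h).1 = c.1 ∧ ((bx c n h).2.1 : ℕ) = (c.2.1 : ℕ) ∧ ((bx c n h).2.2 : ℕ) = n := ⟨rfl, rfl, rfl⟩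
    rw [if_pos hc]
  · intro e he
    rw [if_neg]
    rintro ⟨h1, h2, h3⟩
    exact he ((pbox_eq_iff e (bx c n h)).2 ⟨by simpa using h1, by simpa using h2, by simpa using h3⟩)

lemma sum_vanish (f : PBox s p r → F) (c : PBox s p r) (n : ℕ) (h : ¬ n < p c.1) :
    (∑ e : PBox s p r, if e.1 = c.1 ∧ (e.2.1 : ℕ) = (c.2.1 : ℕ) ∧ (e.2.2 : ℕ) = n
      then f e else 0) = 0 := by
  rw [Finset.sum_eq_zero]
  intro e _
  rw [if_neg]
  rintro ⟨h1, h2, h3⟩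
  exact h (h1 ▸ (h3 ▸ e.2.2.isLt))

lemma shiftR_pow_apply (m : ℕ) (e d : PBox s p r) :
    (shiftR p r ^ m : Matrix (PBox s p r) (PBox s p r) F) e d =
      if e.1 = d.1 ∧ (e.2.1 : ℕ) = (d.2.1 : ℕ) ∧ (e.2.2 : ℕ) + m = (d.2.2 : ℕ) then 1 else 0 := by
  induction m generalizing d with
  | zero =>
    simp only [pow_zero, Matrix.one_apply, Nat.add_zero]
    by_cases h : e = d
    · rw [if_pos h, if_pos ((pbox_eq_iff e d).1 h)]
    · rw [if_neg h, if_neg (fun hc => h ((pbox_eq_iff e d).2 hc))]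
  | succ n ih =>
    rw [pow_succ, Matrix.mul_apply]
    by_cases hd : 1 ≤ (d.2.2 : ℕ)
    · have hstep : ∀ f : PBox s p r,
          (shiftR p r ^ n : Matrix (PBox s p r) (PBox s p r) F) e f * shiftR p r f d =
          if f.1 = d.1 ∧ (f.2.1 : ℕ) = (d.2.1 : ℕ) ∧ (f.2.2 : ℕ) = (d.2.2 : ℕ) - 1 then
            (shiftR p r ^ n : Matrix (PBox s p r) (PBox s p r) F) e f else 0 := by
        intro f
        unfold shiftR
        show _ * (if f.1 = d.1 ∧ (f.2.1 : ℕ) = (d.2.1 : ℕ) ∧ (f.2.2 : ℕ) + 1 = (d.2.2 : ℕ) then (1 : F) else 0) = _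
        by_cases hf : f.1 = d.1 ∧ (f.2.1 : ℕ) = (d.2.1 : ℕ) ∧ (f.2.2 : ℕ) + 1 = (d.2.2 : ℕ)
        · rw [if_pos hf, mul_one, if_pos ⟨hf.1, hf.2.1, by omega⟩]
        · rw [if_neg hf, mul_zero, if_neg (fun hc => hf ⟨hc.1, hc.2.1, by omega⟩)]
      rw [Finset.sum_congr rfl (fun f _ => hstep f),
        sum_collapse _ d ((d.2.2 : ℕ) - 1) (Nat.lt_of_le_of_lt (Nat.sub_le _ _) d.2.2.isLt),
        ih]
      refine if_congr ?_ rfl rfl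
      simp only [bx_fst, bx_row, bx_col]
      constructor
      · rintro ⟨h1, h2, h3⟩; exact ⟨h1, h2, by omega⟩
      · rintro ⟨h1, h2, h3⟩; exact ⟨h1, h2, by omega⟩
    · rw [Finset.sum_eq_zero, if_neg (by omega)]
      intro f _
      unfold shiftR
      show _ * (if f.1 = d.1 ∧ (f.2.1 : ℕ) = (d.2.1 : ℕ) ∧ (f.2.2 : ℕ) + 1 = (d.2.2 : ℕ) then (1 : F) else 0) = 0
      rw [if_neg (by omega), mul_zero]

lemma mul_shiftRpow (M : Matrix (PBox s p r) (PBox s p r) F) (m : ℕ) (c d : PBox s p r) :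
    (M * shiftR p r ^ m : Matrix (PBox s p r) (PBox s p r) F) c d =
      if h : m ≤ (d.2.2 : ℕ) then
        M c (bx d ((d.2.2 : ℕ) - m) (Nat.lt_of_le_of_lt (Nat.sub_le _ _) d.2.2.isLt))
      else 0 := by
  rw [Matrix.mul_apply]
  have hstep : ∀ e : PBox s p r,
      M c e * (shiftR p r ^ m : Matrix (PBox s p r) (PBox s p r) F) e d =
      if e.1 = d.1 ∧ (e.2.1 : ℕ) = (d.2.1 : ℕ) ∧ (e.2.2 : ℕ) = (d.2.2 : ℕ) - m
          ∧ (e.2.2 : ℕ) + m = (d.2.2 : ℕ) then M c e else 0 := by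
    intro e
    rw [shiftR_pow_apply]
    by_cases he : e.1 = d.1 ∧ (e.2.1 : ℕ) = (d.2.1 : ℕ) ∧ (e.2.2 : ℕ) + m = (d.2.2 : ℕ)
    · rw [if_pos he, mul_one, if_pos ⟨he.1, he.2.1, by omega, he.2.2⟩]
    · rw [if_neg he, mul_zero, if_neg (fun hc => he ⟨hc.1, hc.2.1, hc.2.2.2⟩)]
  rw [Finset.sum_congr rfl (fun e _ => hstep e)]
  by_cases h : m ≤ (d.2.2 : ℕ)
  · rw [dif_pos h]
    have : ∀ e : PBox s p r,
        (if e.1 = d.1 ∧ (e.2.1 : ℕ) = (d.2.1 : ℕ) ∧ (e.2.2 : ℕ) = (d.2.2 : ℕ) - m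
          ∧ (e.2.2 : ℕ) + m = (d.2.2 : ℕ) then M c e else 0) =
        (if e.1 = d.1 ∧ (e.2.1 : ℕ) = (d.2.1 : ℕ) ∧ (e.2.2 : ℕ) = (d.2.2 : ℕ) - m
          then M c e else 0) := by
      intro e
      refine if_congr ⟨fun hc => ⟨hc.1, hc.2.1, hc.2.2.1⟩, fun hc => ⟨hc.1, hc.2.1, hc.2.2, by omega⟩⟩ rfl rfl
    rw [Finset.sum_congr rfl (fun e _ => this e),
      sum_collapse _ d ((d.2.2 : ℕ) - m) (Nat.lt_of_le_of_lt (Nat.sub_le _ _) d.2.2.isLt)]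
  · rw [dif_neg h, Finset.sum_eq_zero]
    intro e _
    rw [if_neg (by omega)]

lemma shiftL_mul (M : Matrix (PBox s p r) (PBox s p r) F) (c d : PBox s p r) :
    (shiftL p r * M : Matrix (PBox s p r) (PBox s p r) F) c d =
      if h : 1 ≤ (c.2.2 : ℕ) then
        M (bx c ((c.2.2 : ℕ) - 1) (Nat.lt_of_le_of_lt (Nat.sub_le _ _) c.2.2.isLt)) d
      else 0 := by
  rw [Matrix.mul_apply]
  have hstep : ∀ e : PBox s p r,
      shiftL p r c e * M e d =
      if e.1 = c.1 ∧ (e.2.1 : ℕ) = (c.2.1 : ℕ) ∧ (e.2.2 : ℕ) = (c.2.2 : ℕ) - 1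
          ∧ (e.2.2 : ℕ) + 1 = (c.2.2 : ℕ) then M e d else 0 := by
    intro e
    unfold shiftL
    by_cases he : c.1 = e.1 ∧ (c.2.1 : ℕ) = (e.2.1 : ℕ) ∧ (c.2.2 : ℕ) = (e.2.2 : ℕ) + 1
    · rw [if_pos he, one_mul, if_pos ⟨he.1.symm, he.2.1.symm, by omega, by omega⟩]
    · rw [if_neg he, zero_mul, if_neg (fun hc => he ⟨hc.1.symm, hc.2.1.symm, by omega⟩)]
  rw [Finset.sum_congr rfl (fun e _ => hstep e)]
  by_cases h : 1 ≤ (c.2.2 : ℕ)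
  · rw [dif_pos h]
    have : ∀ e : PBox s p r,
        (if e.1 = c.1 ∧ (e.2.1 : ℕ) = (c.2.1 : ℕ) ∧ (e.2.2 : ℕ) = (c.2.2 : ℕ) - 1
          ∧ (e.2.2 : ℕ) + 1 = (c.2.2 : ℕ) then M e d else 0) =
        (if e.1 = c.1 ∧ (e.2.1 : ℕ) = (c.2.1 : ℕ) ∧ (e.2.2 : ℕ) = (c.2.2 : ℕ) - 1
          then M e d else 0) := by
      intro e
      refine if_congr ⟨fun hc => ⟨hc.1, hc.2.1, hc.2.2.1⟩, fun hc => ⟨hc.1, hc.2.1, hc.2.2, by omega⟩⟩ rfl rfl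
    rw [Finset.sum_congr rfl (fun e _ => this e),
      sum_collapse _ c ((c.2.2 : ℕ) - 1) (Nat.lt_of_le_of_lt (Nat.sub_le _ _) c.2.2.isLt)]
  · rw [dif_neg h, Finset.sum_eq_zero]
    intro e _
    rw [if_neg (by omega)]

lemma mul_shiftL (M : Matrix (PBox s p r) (PBox s p r) F) (c d : PBox s p r) :
    (M * shiftL p r : Matrix (PBox s p r) (PBox s p r) F) c d =
      if h : (d.2.2 : ℕ) + 1 < p d.1 then M c (bx d ((d.2.2 : ℕ) + 1) h) else 0 := by
  rw [Matrix.mul_apply]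
  have hstep : ∀ e : PBox s p r,
      M c e * shiftL p r e d =
      if e.1 = d.1 ∧ (e.2.1 : ℕ) = (d.2.1 : ℕ) ∧ (e.2.2 : ℕ) = (d.2.2 : ℕ) + 1
          then M c e else 0 := by
    intro e
    unfold shiftL
    by_cases he : e.1 = d.1 ∧ (e.2.1 : ℕ) = (d.2.1 : ℕ) ∧ (e.2.2 : ℕ) = (d.2.2 : ℕ) + 1
    · rw [if_pos he, mul_one, if_pos he]
    · rw [if_neg he, mul_zero, if_neg he]
  rw [Finset.sum_congr rfl (fun e _ => hstep e)]
  by_cases h : (d.2.2 : ℕ) + 1 < p d.1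
  · rw [dif_pos h, sum_collapse _ d ((d.2.2 : ℕ) + 1) h]
  · rw [dif_neg h, sum_vanish _ d _ h]


lemma fin_sum_delta {n : ℕ} (m : ℕ) (H : Fin n → F) :
    (∑ k : Fin n, if (k : ℕ) = m then H k else 0) = if h : m < n then H ⟨m, h⟩ else 0 := by
  by_cases h : m < n
  · rw [dif_pos h, Fintype.sum_eq_single (⟨m, h⟩ : Fin n)]
    · rw [if_pos rfl]
    · intro k hk
      rw [if_neg (fun hc => hk (Fin.ext hc))]
  · rw [dif_neg h, Finset.sum_eq_zero]
    intro k _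
    rw [if_neg]
    intro hc
    exact h (hc ▸ k.isLt)

lemma sum_pbox (G : PBox s p r → F) :
    ∑ c : PBox s p r, G c = ∑ i : Fin s, ∑ j : Fin (r i), ∑ k : Fin (p i), G ⟨i, (j, k)⟩ := by
  rw [← Finset.univ_sigma_univ, Finset.sum_sigma]
  refine Finset.sum_congr rfl (fun i _ => ?_)
  rw [Fintype.sum_prod_type]

lemma sum_col_collapse (m : ℕ) (G : PBox s p r → F) :
    (∑ c : PBox s p r, if (c.2.2 : ℕ) = m then G c else 0)
      = ∑ i : Fin s, ∑ j : Fin (r i), if h : m < p i then G ⟨i, (j, ⟨m, h⟩)⟩ else 0 := by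
  rw [sum_pbox (fun c => if (c.2.2 : ℕ) = m then G c else 0)]
  refine Finset.sum_congr rfl (fun i _ => Finset.sum_congr rfl (fun j _ => ?_))
  exact fin_sum_delta m (fun k => G ⟨i, (j, k)⟩)

section Main

variable (q : ℕ)

lemma K1 (hq2 : 2 ≤ q) (hmax : ∀ i : Fin s, p i ≤ q) (c : PBox s p r)
    (h : pdeg c = (q : ℤ) - 1) : p c.1 = q ∧ (c.2.2 : ℕ) = 0 := by
  have h1 := hmax c.1; have h2 := c.2.2.isLt
  unfold pdeg at h; omega

lemma K2 (hq2 : 2 ≤ q) (hmax : ∀ i : Fin s, p i ≤ q) (c : PBox s p r)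
    (h : pdeg c = 1 - (q : ℤ)) : p c.1 = q ∧ (c.2.2 : ℕ) = q - 1 := by
  have h1 := hmax c.1; have h2 := c.2.2.isLt
  unfold pdeg at h; omega

lemma K3 (hq2 : 2 ≤ q) (hmax : ∀ i : Fin s, p i ≤ q) (c : PBox s p r)
    (h : pdeg c = (q : ℤ) - 2) : p c.1 = q - 1 ∧ (c.2.2 : ℕ) = 0 := by
  have h1 := hmax c.1; have h2 := c.2.2.isLt
  unfold pdeg at h; omega

lemma K4 (hq2 : 2 ≤ q) (hmax : ∀ i : Fin s, p i ≤ q) (c : PBox s p r)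
    (h : pdeg c = 2 - (q : ℤ)) : p c.1 = q - 1 ∧ (c.2.2 : ℕ) = q - 2 := by
  have h1 := hmax c.1; have h2 := c.2.2.isLt
  unfold pdeg at h; omega

lemma pdeg_le (hmax : ∀ i : Fin s, p i ≤ q) (c : PBox s p r) : pdeg c ≤ (q : ℤ) - 1 := by
  have h1 := hmax c.1; have h2 := c.2.2.isLt
  unfold pdeg; omega

lemma pdeg_ge (hmax : ∀ i : Fin s, p i ≤ q) (c : PBox s p r) : 1 - (q : ℤ) ≤ pdeg c := by
  have h1 := hmax c.1; have h2 := c.2.2.isLt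
  unfold pdeg; omega

variable (a b : Matrix (PBox s p r) (PBox s p r) F)

/-- The element `E`. -/
def EE : Matrix (PBox s p r) (PBox s p r) F := a * shiftR p r ^ (q - 2) + b * shiftR p r ^ (q - 1)

variable (hq2 : 2 ≤ q) (hmax : ∀ i : Fin s, p i ≤ q)
  (ha : ∀ b' b0 : PBox s p r, a b' b0 ≠ 0 → pdeg b' = (q : ℤ) - 1 ∧ pdeg b0 = ((q : ℤ) - 1) - 1)
  (hb : ∀ b' b0 : PBox s p r, b b' b0 ≠ 0 → pdeg b' = ((q : ℤ) - 1) - 1 ∧ pdeg b0 = (q : ℤ) - 1)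

include hq2 hmax ha hb

lemma E_apply (u c : PBox s p r) :
    EE q a b u c = (if (c.2.2 : ℕ) + 2 = q then a u (col0 c) else 0)
      + (if (c.2.2 : ℕ) + 1 = q then b u (col0 c) else 0) := by
  have hcle : (c.2.2 : ℕ) < p c.1 := c.2.2.isLt
  have hcq : (c.2.2 : ℕ) < q := lt_of_lt_of_le hcle (hmax c.1)
  rw [EE, Matrix.add_apply, mul_shiftRpow, mul_shiftRpow]
  congr 1
  · by_cases h : q - 2 ≤ (c.2.2 : ℕ)
    · rw [dif_pos h]
      by_cases h2 : (c.2.2 : ℕ) + 2 = q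
      · rw [if_pos h2]
        congr 1
        rw [pbox_eq_iff]
        refine ⟨rfl, rfl, by simp only [bx_col, col0_col]; omega⟩
      · rw [if_neg h2]
        by_contra hne
        have hsup := ha _ _ hne
        have hpd := hsup.2
        simp only [pdeg, bx] at hpd
        have := c.2.2.isLt
        have hm := hmax c.1
        omega
    · rw [dif_neg h, if_neg (by omega)]
  · by_cases h : q - 1 ≤ (c.2.2 : ℕ)
    · rw [dif_pos h]
      have h2 : (c.2.2 : ℕ) + 1 = q := by omega
      rw [if_pos h2]
      congr 1
      rw [pbox_eq_iff]
      refine ⟨rfl, rfl, by simp; omega⟩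
    · rw [dif_neg h, if_neg (by omega)]

lemma E_supp (u c : PBox s p r) (h : EE q a b u c ≠ 0) :
    (pdeg u = (q : ℤ) - 1 ∧ pdeg c = 2 - (q : ℤ) ∧ (c.2.2 : ℕ) + 2 = q ∧ p c.1 = q - 1) ∨
    (pdeg u = (q : ℤ) - 2 ∧ pdeg c = 1 - (q : ℤ) ∧ (c.2.2 : ℕ) + 1 = q ∧ p c.1 = q) := by
  rw [E_apply q a b hq2 hmax ha hb] at h
  have hcle : (c.2.2 : ℕ) < p c.1 := c.2.2.isLt
  by_cases h1 : (c.2.2 : ℕ) + 2 = q ∧ a u (col0 c) ≠ 0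
  · left
    have hsup := ha _ _ h1.2
    have hc0 : pdeg (col0 c) = (q : ℤ) - 2 := by
      have := hsup.2; omega
    rw [pdeg_col0] at hc0
    refine ⟨hsup.1, ?_, h1.1, by omega⟩
    rw [pdeg_def]; omega
  · right
    have h2 : (c.2.2 : ℕ) + 1 = q ∧ b u (col0 c) ≠ 0 := by
      by_contra h2
      apply h
      have e1 : (if (c.2.2 : ℕ) + 2 = q then a u (col0 c) else 0) = 0 := by
        by_cases hc : (c.2.2 : ℕ) + 2 = q
        · rw [if_pos hc]
          by_contra hne
          exact h1 ⟨hc, hne⟩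
        · rw [if_neg hc]
      have e2 : (if (c.2.2 : ℕ) + 1 = q then b u (col0 c) else 0) = 0 := by
        by_cases hc : (c.2.2 : ℕ) + 1 = q
        · rw [if_pos hc]
          by_contra hne
          exact h2 ⟨hc, hne⟩
        · rw [if_neg hc]
      rw [e1, e2, add_zero]
    have hsup := hb _ _ h2.2
    have hc0 : pdeg (col0 c) = (q : ℤ) - 1 := hsup.2
    rw [pdeg_col0] at hc0
    refine ⟨by have := hsup.1; omega, ?_, h2.1, by omega⟩
    rw [pdeg_def]; omega

end Main

/-- elementary matrix -/
def eM (u0 w0 : PBox s p r) : Matrix (PBox s p r) (PBox s p r) F :=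
  fun u w => if u = u0 ∧ w = w0 then 1 else 0

lemma trace_mul_eM (M : Matrix (PBox s p r) (PBox s p r) F) (u0 w0 : PBox s p r) :
    Matrix.trace (M * eM u0 w0) = M w0 u0 := by
  unfold Matrix.trace
  rw [Fintype.sum_eq_single w0]
  · rw [Matrix.diag_apply, Matrix.mul_apply, Fintype.sum_eq_single u0]
    · unfold eM
      rw [if_pos ⟨rfl, rfl⟩, mul_one]
    · intro e he
      unfold eM
      rw [if_neg (fun hc => he hc.1), mul_zero]
  · intro d hd
    rw [Matrix.diag_apply, Matrix.mul_apply, Finset.sum_eq_zero]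
    intro e _
    unfold eM
    rw [if_neg (fun hc => hd hc.2), mul_zero]

lemma omega_comm (x z : Matrix (PBox s p r) (PBox s p r) F) :
    Matrix.trace (shiftL p r * (x * z - z * x)) =
      Matrix.trace ((shiftL p r * x - x * shiftL p r) * z) := by
  rw [mul_sub, sub_mul, Matrix.trace_sub, Matrix.trace_sub, ← mul_assoc]
  congr 1
  rw [← mul_assoc, Matrix.trace_mul_comm (shiftL p r * z) x, ← mul_assoc]

lemma omega_expand (x z : Matrix (PBox s p r) (PBox s p r) F) :
    Matrix.trace (shiftL p r * (x * z - z * x)) =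
      ∑ d : PBox s p r, ∑ c : PBox s p r,
        (shiftL p r * x - x * shiftL p r : Matrix (PBox s p r) (PBox s p r) F) d c * z c d := by
  rw [omega_comm]
  unfold Matrix.trace
  refine Finset.sum_congr rfl (fun d _ => ?_)
  rw [Matrix.diag_apply, Matrix.mul_apply]


lemma bx_congr (c : PBox s p r) (n n' : ℕ) (h : n < p c.1) (h' : n' < p c.1) (e : n = n') :
    bx c n h = bx c n' h' := by subst e; rfl

lemma bx_self (c : PBox s p r) (n : ℕ) (h : n < p c.1) (e : (c.2.2 : ℕ) = n) : bx c n h = c := by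
  refine ((pbox_eq_iff _ _).2 ⟨rfl, rfl, ?_⟩)
  rw [bx_col, e]

section Main2

variable (q : ℕ) (a b : Matrix (PBox s p r) (PBox s p r) F)
  (hq2 : 2 ≤ q) (hmax : ∀ i : Fin s, p i ≤ q)
  (ha : ∀ b' b0 : PBox s p r, a b' b0 ≠ 0 → pdeg b' = (q : ℤ) - 1 ∧ pdeg b0 = ((q : ℤ) - 1) - 1)
  (hb : ∀ b' b0 : PBox s p r, b b' b0 ≠ 0 → pdeg b' = ((q : ℤ) - 1) - 1 ∧ pdeg b0 = (q : ℤ) - 1)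

def ztM (bh bv : PBox s p r) : Matrix (PBox s p r) (PBox s p r) F := fun u w =>
  (if w = bv ∧ (u.2.2 : ℕ) + 2 = q then b (col0 u) bh else 0)
  + (if u = bh ∧ (w.2.2 : ℕ) = 0 then a (col0 bv) w else 0)

lemma projDeg_smul_apply (lam : F) (c : ℤ) (u w : PBox s p r) :
    (lam • projDeg p r c : Matrix (PBox s p r) (PBox s p r) F) u w
      = if u = w ∧ pdeg w = c then lam else 0 := by
  rw [Matrix.smul_apply]
  unfold projDeg
  rw [smul_eq_mul, mul_ite, mul_one, mul_zero]

def xtM (bh bv : PBox s p r) : Matrix (PBox s p r) (PBox s p r) F := fun u w =>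
  (if col0 w = col0 bv ∧ (u.2.2 : ℕ) + 1 = (w.2.2 : ℕ) then b (col0 u) bh else 0)
  + (if col0 u = bh ∧ (u.2.2 : ℕ) = (w.2.2 : ℕ) then a (col0 bv) (col0 w) else 0)

include hq2 hmax ha hb

lemma a_supp (u w : PBox s p r) (h : a u w ≠ 0) :
    p u.1 = q ∧ (u.2.2 : ℕ) = 0 ∧ p w.1 = q - 1 ∧ (w.2.2 : ℕ) = 0 := by
  obtain ⟨h1, h2⟩ := ha u w h
  obtain ⟨g1, g2⟩ := K1 q hq2 hmax u h1
  obtain ⟨g3, g4⟩ := K3 q hq2 hmax w (by omega)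
  exact ⟨g1, g2, g3, g4⟩

lemma b_supp (u w : PBox s p r) (h : b u w ≠ 0) :
    p u.1 = q - 1 ∧ (u.2.2 : ℕ) = 0 ∧ p w.1 = q ∧ (w.2.2 : ℕ) = 0 := by
  obtain ⟨h1, h2⟩ := hb u w h
  obtain ⟨g1, g2⟩ := K3 q hq2 hmax u (by omega)
  obtain ⟨g3, g4⟩ := K1 q hq2 hmax w h2
  exact ⟨g1, g2, g3, g4⟩

lemma key (x : Matrix (PBox s p r) (PBox s p r) F) (u0 w0 : PBox s p r)
    (hu0 : pdeg u0 = (q : ℤ) - 1) (hw0 : pdeg w0 = 1 - (q : ℤ)) :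
    (EE q a b * x - x * EE q a b : Matrix (PBox s p r) (PBox s p r) F) u0 w0
      = (∑ c : PBox s p r, if (c.2.2 : ℕ) + 2 = q then a u0 (col0 c) * x c w0 else 0)
        - ∑ c : PBox s p r, x u0 c * b c (col0 w0) := by
  rw [Matrix.sub_apply, Matrix.mul_apply, Matrix.mul_apply]
  congr 1
  · refine Finset.sum_congr rfl (fun c _ => ?_)
    rw [E_apply q a b hq2 hmax ha hb]
    have hbz : b u0 (col0 c) = 0 := by
      by_contra h
      have := (hb _ _ h).1
      omega
    rw [hbz, ite_self, add_zero, ite_mul, zero_mul]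
  · refine Finset.sum_congr rfl (fun c _ => ?_)
    rw [E_apply q a b hq2 hmax ha hb]
    have hw0k : (w0.2.2 : ℕ) = q - 1 := (K2 q hq2 hmax w0 hw0).2
    rw [if_neg (by omega), if_pos (by omega), zero_add]

lemma E_offblock (x : Matrix (PBox s p r) (PBox s p r) F)
    (hx : ∀ u w : PBox s p r, pdeg u - pdeg w ≠ 1 → x u w = 0)
    (u0 w0 : PBox s p r) (hblock : ¬ (pdeg u0 = (q : ℤ) - 1 ∧ pdeg w0 = 1 - (q : ℤ))) :
    (EE q a b * x - x * EE q a b : Matrix (PBox s p r) (PBox s p r) F) u0 w0 = 0 := by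
  rw [Matrix.sub_apply, Matrix.mul_apply, Matrix.mul_apply]
  rw [Finset.sum_eq_zero, Finset.sum_eq_zero, sub_zero]
  · intro c _
    by_cases hE : EE q a b c w0 = 0
    · rw [hE, mul_zero]
    · rcases E_supp q a b hq2 hmax ha hb c w0 hE with ⟨g1, g2, _, _⟩ | ⟨g1, g2, _, _⟩
      · have : x u0 c = 0 := by
          refine hx u0 c ?_
          have := pdeg_le q hmax u0
          omega
        rw [this, zero_mul]
      · by_cases hxc : x u0 c = 0
        · rw [hxc, zero_mul]
        · exfalso
          have hd : pdeg u0 - pdeg c = 1 := by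
            by_contra hne
            exact hxc (hx u0 c hne)
          exact hblock ⟨by omega, g2⟩
  · intro c _
    by_cases hE : EE q a b u0 c = 0
    · rw [hE, zero_mul]
    · rcases E_supp q a b hq2 hmax ha hb u0 c hE with ⟨g1, g2, _, _⟩ | ⟨g1, g2, _, _⟩
      · by_cases hxc : x c w0 = 0
        · rw [hxc, mul_zero]
        · exfalso
          have hd : pdeg c - pdeg w0 = 1 := by
            by_contra hne
            exact hxc (hx c w0 hne)
          exact hblock ⟨g1, by omega⟩
      · have : x c w0 = 0 := by
          refine hx c w0 ?_
          have := pdeg_ge q hmax w0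
          omega
        rw [this, mul_zero]

lemma chain (x : Matrix (PBox s p r) (PBox s p r) F)
    (horth : ∀ z : Matrix (PBox s p r) (PBox s p r) F,
      (∀ u w : PBox s p r, pdeg u - pdeg w ≠ 1 → z u w = 0) →
      EE q a b * z = z * EE q a b →
      Matrix.trace (shiftL p r * (x * z - z * x)) = 0)
    (c0 d0 : PBox s p r) (hdeg : pdeg c0 = pdeg d0 + 1)
    (h1 : pdeg d0 ≠ 1 - (q : ℤ)) (h2 : pdeg d0 ≠ (q : ℤ) - 2) (h3 : pdeg d0 ≠ (q : ℤ) - 1) :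
    (shiftL p r * x - x * shiftL p r : Matrix (PBox s p r) (PBox s p r) F) d0 c0 = 0 := by
  have hg1 : ∀ u w : PBox s p r, pdeg u - pdeg w ≠ 1 → eM c0 d0 u w = (0 : F) := by
    intro u w hne
    unfold eM
    rw [if_neg]
    rintro ⟨rfl, rfl⟩
    omega
  have hcomm : EE q a b * eM c0 d0 = eM c0 d0 * EE q a b := by
    ext u w
    rw [Matrix.mul_apply, Matrix.mul_apply, Finset.sum_eq_zero, Finset.sum_eq_zero]
    · intro e _
      unfold eM
      by_cases he : u = c0 ∧ e = d0
      · rw [if_pos he]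
        have hEz : EE q a b d0 w = 0 := by
          by_contra hE
          rcases E_supp q a b hq2 hmax ha hb d0 w hE with ⟨g1, _, _, _⟩ | ⟨g1, _, _, _⟩
          · exact h3 g1
          · exact h2 g1
        rw [he.2, hEz, mul_zero]
      · rw [if_neg he, zero_mul]
    · intro e _
      unfold eM
      by_cases he : e = c0 ∧ w = d0
      · have hEz : EE q a b u c0 = 0 := by
          by_contra hE
          rcases E_supp q a b hq2 hmax ha hb u c0 hE with ⟨_, g2, _, _⟩ | ⟨_, g2, _, _⟩
          · exact h1 (by omega)
          · have := pdeg_ge q hmax d0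
            omega
        rw [he.1, hEz, zero_mul]
      · rw [if_neg he, mul_zero]
  have h0 := horth (eM c0 d0) hg1 hcomm
  rw [omega_comm, trace_mul_eM] at h0
  exact h0


lemma yconst (x : Matrix (PBox s p r) (PBox s p r) F)
    (horth : ∀ z : Matrix (PBox s p r) (PBox s p r) F,
      (∀ u w : PBox s p r, pdeg u - pdeg w ≠ 1 → z u w = 0) →
      EE q a b * z = z * EE q a b →
      Matrix.trace (shiftL p r * (x * z - z * x)) = 0) :
    ∀ k : ℕ, k ≤ q - 2 → ∀ (d c : PBox s p r) (hd : p d.1 = q - 1) (hc : p c.1 = q)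
      (hdk : (d.2.2 : ℕ) = k) (hck : (c.2.2 : ℕ) = k + 1),
      x d c = x (bx d 0 (box_pos d)) (bx c 1 (by rw [hc]; omega)) := by
  intro k
  induction k with
  | zero =>
    intro _ d c hd hc hdk hck
    rw [bx_self d 0 (box_pos d) hdk, bx_self c 1 _ hck]
  | succ k ih =>
    intro hk d c hd hc hdk hck
    have hc1 : k + 1 < p c.1 := by omega
    have hch := chain q a b hq2 hmax ha hb x horth (bx c (k+1) hc1) d
      (by simp only [pdeg_def, bx_fst, bx_col]; omega)
      (by simp only [pdeg_def]; omega)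
      (by simp only [pdeg_def]; omega)
      (by simp only [pdeg_def]; omega)
    rw [Matrix.sub_apply, shiftL_mul, mul_shiftL, sub_eq_zero] at hch
    rw [dif_pos (show 1 ≤ (d.2.2 : ℕ) by omega)] at hch
    rw [dif_pos (show ((bx c (k+1) hc1).2.2 : ℕ) + 1 < p (bx c (k+1) hc1).1 by
      rw [bx_col, bx_fst, hc]; omega)] at hch
    have e1 : bx d ((d.2.2 : ℕ) - 1) (Nat.lt_of_le_of_lt (Nat.sub_le _ _) d.2.2.isLt)
        = bx d k (by omega) := bx_congr d _ k _ _ (by omega)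
    have e2 : bx (bx c (k+1) hc1) (((bx c (k+1) hc1).2.2 : ℕ) + 1)
        (by rw [bx_col, bx_fst, hc]; omega) = c := by
      refine (pbox_eq_iff _ _).2 ⟨rfl, rfl, ?_⟩
      rw [bx_col, bx_col, hck]
    rw [e1, e2] at hch
    have := ih (by omega) (bx d k (by omega)) (bx c (k+1) hc1)
      (by rw [bx_fst]; exact hd) (by rw [bx_fst]; exact hc) (by rw [bx_col]) (by rw [bx_col])
    rw [← hch]
    exact this

lemma wconst (x : Matrix (PBox s p r) (PBox s p r) F)
    (horth : ∀ z : Matrix (PBox s p r) (PBox s p r) F,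
      (∀ u w : PBox s p r, pdeg u - pdeg w ≠ 1 → z u w = 0) →
      EE q a b * z = z * EE q a b →
      Matrix.trace (shiftL p r * (x * z - z * x)) = 0) :
    ∀ k : ℕ, k ≤ q - 2 → ∀ (d c : PBox s p r) (hd : p d.1 = q) (hc : p c.1 = q - 1)
      (hdk : (d.2.2 : ℕ) = k) (hck : (c.2.2 : ℕ) = k),
      x d c = x (bx d 0 (box_pos d)) (bx c 0 (box_pos c)) := by
  intro k
  induction k with
  | zero =>
    intro _ d c hd hc hdk hck
    rw [bx_self d 0 (box_pos d) hdk, bx_self c 0 (box_pos c) hck]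
  | succ k ih =>
    intro hk d c hd hc hdk hck
    have hc1 : k < p c.1 := by omega
    have hch := chain q a b hq2 hmax ha hb x horth (bx c k hc1) d
      (by simp only [pdeg_def, bx_fst, bx_col]; omega)
      (by simp only [pdeg_def]; omega)
      (by simp only [pdeg_def]; omega)
      (by simp only [pdeg_def]; omega)
    rw [Matrix.sub_apply, shiftL_mul, mul_shiftL, sub_eq_zero] at hch
    rw [dif_pos (show 1 ≤ (d.2.2 : ℕ) by omega)] at hch
    rw [dif_pos (show ((bx c k hc1).2.2 : ℕ) + 1 < p (bx c k hc1).1 by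
      rw [bx_col, bx_fst, hc]; omega)] at hch
    have e1 : bx d ((d.2.2 : ℕ) - 1) (Nat.lt_of_le_of_lt (Nat.sub_le _ _) d.2.2.isLt)
        = bx d k (by omega) := bx_congr d _ k _ _ (by omega)
    have e2 : bx (bx c k hc1) (((bx c k hc1).2.2 : ℕ) + 1)
        (by rw [bx_col, bx_fst, hc]; omega) = c := by
      refine (pbox_eq_iff _ _).2 ⟨rfl, rfl, ?_⟩
      rw [bx_col, bx_col, hck]
    rw [e1, e2] at hch
    have := ih (by omega) (bx d k (by omega)) (bx c k hc1)
      (by rw [bx_fst]; exact hd) (by rw [bx_fst]; exact hc) (by rw [bx_col]) (by rw [bx_col])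
    rw [← hch]
    exact this

lemma ab_sum0 (u w0 : PBox s p r) :
    (∑ e : PBox s p r, if (e.2.2 : ℕ) = 0 then a u e * b e w0 else 0) = (a * b) u w0 := by
  rw [Matrix.mul_apply]
  refine Finset.sum_congr rfl (fun e _ => ?_)
  by_cases he : (e.2.2 : ℕ) = 0
  · rw [if_pos he]
  · rw [if_neg he]
    by_cases haz : a u e = 0
    · rw [haz, zero_mul]
    · exact absurd (a_supp q a b hq2 hmax ha hb u e haz).2.2.2 he

lemma ab_sum1 (u w0 : PBox s p r) :
    (∑ e : PBox s p r, if (e.2.2 : ℕ) + 2 = q then a u (col0 e) * b (col0 e) w0 else 0)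
      = (a * b) u w0 := by
  rw [← ab_sum0 q a b hq2 hmax ha hb u w0]
  have h1 : ∀ e : PBox s p r,
      (if (e.2.2 : ℕ) + 2 = q then a u (col0 e) * b (col0 e) w0 else 0)
        = (if (e.2.2 : ℕ) = q - 2 then a u (col0 e) * b (col0 e) w0 else 0) :=
    fun e => if_congr (by omega) rfl rfl
  rw [Finset.sum_congr rfl (fun e _ => h1 e),
    sum_col_collapse (q - 2) (fun e => a u (col0 e) * b (col0 e) w0),
    sum_col_collapse 0 (fun e => a u e * b e w0)]
  refine Finset.sum_congr rfl (fun i _ => Finset.sum_congr rfl (fun j _ => ?_))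
  by_cases h1 : q - 2 < p i
  · rw [dif_pos h1, dif_pos (by omega)]
    rfl
  · rw [dif_neg h1]
    by_cases h2 : 0 < p i
    · rw [dif_pos h2]
      by_cases hbz : b ⟨i, (j, ⟨0, h2⟩)⟩ w0 = 0
      · rw [hbz, mul_zero]
      · exfalso
        have hpi : p i = q - 1 := (b_supp q a b hq2 hmax ha hb _ w0 hbz).1
        omega
    · rw [dif_neg h2]

lemma zt_g1 (bh bv : PBox s p r) (hbh : pdeg bh = (q : ℤ) - 1) (hbv : pdeg bv = 1 - (q : ℤ)) :
    ∀ u w : PBox s p r, pdeg u - pdeg w ≠ 1 → ztM q a b bh bv u w = 0 := by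
  intro u w hne
  unfold ztM
  have h1 : (if w = bv ∧ (u.2.2 : ℕ) + 2 = q then b (col0 u) bh else 0) = 0 := by
    by_cases hc : w = bv ∧ (u.2.2 : ℕ) + 2 = q
    · obtain ⟨rfl, hu2⟩ := hc
      rw [if_pos ⟨rfl, hu2⟩]
      by_contra hbz
      have hpu : p u.1 = q - 1 := by
        have := (b_supp q a b hq2 hmax ha hb _ _ hbz).1
        simpa using this
      refine hne ?_
      rw [hbv, pdeg_def]
      omega
    · rw [if_neg hc]
  have h2 : (if u = bh ∧ (w.2.2 : ℕ) = 0 then a (col0 bv) w else 0) = 0 := by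
    by_cases hc : u = bh ∧ (w.2.2 : ℕ) = 0
    · obtain ⟨rfl, hw2⟩ := hc
      rw [if_pos ⟨rfl, hw2⟩]
      by_contra haz
      have hsup := a_supp q a b hq2 hmax ha hb _ _ haz
      refine hne ?_
      rw [hbh, pdeg_def]
      have h3 : p w.1 = q - 1 := hsup.2.2.1
      omega
    · rw [if_neg hc]
  rw [h1, h2, add_zero]

lemma zt_comm (lam : F) (hab : a * b = lam • projDeg p r ((q : ℤ) - 1))
    (bh bv : PBox s p r) (hbh : pdeg bh = (q : ℤ) - 1) (hbv : pdeg bv = 1 - (q : ℤ)) :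
    EE q a b * ztM q a b bh bv = ztM q a b bh bv * EE q a b := by
  obtain ⟨hph, hkh⟩ := K1 q hq2 hmax bh hbh
  obtain ⟨hpv, hkv⟩ := K2 q hq2 hmax bv hbv
  ext u w
  rw [Matrix.mul_apply, Matrix.mul_apply]
  have hsplitL : ∀ e : PBox s p r, EE q a b u e * ztM q a b bh bv e w
      = EE q a b u e * (if w = bv ∧ (e.2.2 : ℕ) + 2 = q then b (col0 e) bh else 0)
      + EE q a b u e * (if e = bh ∧ (w.2.2 : ℕ) = 0 then a (col0 bv) w else 0) := by
    intro e; rw [← mul_add]; rfl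
  have hsplitR : ∀ e : PBox s p r, ztM q a b bh bv u e * EE q a b e w
      = (if e = bv ∧ (u.2.2 : ℕ) + 2 = q then b (col0 u) bh else 0) * EE q a b e w
      + (if u = bh ∧ (e.2.2 : ℕ) = 0 then a (col0 bv) e else 0) * EE q a b e w := by
    intro e; rw [← add_mul]; rfl
  rw [Finset.sum_congr rfl (fun e _ => hsplitL e), Finset.sum_congr rfl (fun e _ => hsplitR e),
    Finset.sum_add_distrib, Finset.sum_add_distrib]
  have hB : (∑ e : PBox s p r,
      EE q a b u e * (if e = bh ∧ (w.2.2 : ℕ) = 0 then a (col0 bv) w else 0)) = 0 := by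
    refine Finset.sum_eq_zero (fun e _ => ?_)
    by_cases hc : e = bh ∧ (w.2.2 : ℕ) = 0
    · rw [if_pos hc]
      have hE : EE q a b u bh = 0 := by
        rw [E_apply q a b hq2 hmax ha hb]
        have hz : a u (col0 bh) = 0 := by
          by_contra h
          have := (a_supp q a b hq2 hmax ha hb u (col0 bh) h).2.2.1
          simp only [col0_fst] at this
          omega
        rw [hz, ite_self, zero_add, if_neg (by omega)]
      rw [hc.1, hE, zero_mul]
    · rw [if_neg hc, mul_zero]
  have hA : (∑ e : PBox s p r,
      EE q a b u e * (if w = bv ∧ (e.2.2 : ℕ) + 2 = q then b (col0 e) bh else 0))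
      = if w = bv then (a * b) u bh else 0 := by
    by_cases hw : w = bv
    · have hpt : ∀ e : PBox s p r,
          EE q a b u e * (if w = bv ∧ (e.2.2 : ℕ) + 2 = q then b (col0 e) bh else 0)
            = if (e.2.2 : ℕ) + 2 = q then a u (col0 e) * b (col0 e) bh else 0 := by
        intro e
        by_cases hc : (e.2.2 : ℕ) + 2 = q
        · rw [if_pos ⟨hw, hc⟩, if_pos hc]
          have hEe : EE q a b u e = a u (col0 e) := by
            rw [E_apply q a b hq2 hmax ha hb, if_pos hc, if_neg (by omega), add_zero]
          rw [hEe]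
        · rw [if_neg (fun hcc => hc hcc.2), if_neg hc, mul_zero]
      rw [Finset.sum_congr rfl (fun e _ => hpt e), ab_sum1 q a b hq2 hmax ha hb, if_pos hw]
    · rw [if_neg hw, Finset.sum_eq_zero]
      intro e _
      rw [if_neg (fun hc => hw hc.1), mul_zero]
  have hC : (∑ e : PBox s p r,
      (if e = bv ∧ (u.2.2 : ℕ) + 2 = q then b (col0 u) bh else 0) * EE q a b e w) = 0 := by
    refine Finset.sum_eq_zero (fun e _ => ?_)
    by_cases hc : e = bv ∧ (u.2.2 : ℕ) + 2 = q
    · rw [if_pos hc, hc.1]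
      have hE : EE q a b bv w = 0 := by
        rw [E_apply q a b hq2 hmax ha hb]
        have hz1 : a bv (col0 w) = 0 := by
          by_contra h
          have := (a_supp q a b hq2 hmax ha hb bv (col0 w) h).2.1
          omega
        have hz2 : b bv (col0 w) = 0 := by
          by_contra h
          have := (b_supp q a b hq2 hmax ha hb bv (col0 w) h).1
          omega
        rw [hz1, hz2, ite_self, ite_self, add_zero]
      rw [hE, mul_zero]
    · rw [if_neg hc, zero_mul]
  have hD : (∑ e : PBox s p r,
      (if u = bh ∧ (e.2.2 : ℕ) = 0 then a (col0 bv) e else 0) * EE q a b e w)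
      = if u = bh then (if w = bv then lam else 0) else 0 := by
    by_cases hu : u = bh
    · rw [if_pos hu]
      have hpt : ∀ e : PBox s p r,
          (if u = bh ∧ (e.2.2 : ℕ) = 0 then a (col0 bv) e else 0) * EE q a b e w
            = if (w.2.2 : ℕ) + 1 = q then
                (if (e.2.2 : ℕ) = 0 then a (col0 bv) e * b e (col0 w) else 0) else 0 := by
        intro e
        by_cases he : (e.2.2 : ℕ) = 0
        · rw [if_pos ⟨hu, he⟩]
          by_cases haz : a (col0 bv) e = 0
          · simp only [haz, zero_mul, ite_self]
          · have haz2 : a e (col0 w) = 0 := by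
              by_contra hh
              have g1 := (a_supp q a b hq2 hmax ha hb e (col0 w) hh).1
              have g2 := (a_supp q a b hq2 hmax ha hb (col0 bv) e haz).2.2.1
              omega
            rw [E_apply q a b hq2 hmax ha hb, haz2, ite_self, zero_add, mul_ite, mul_zero,
              if_pos he]
        · rw [if_neg (fun hc => he hc.2), zero_mul, if_neg he, ite_self]
      rw [Finset.sum_congr rfl (fun e _ => hpt e)]
      by_cases hwk : (w.2.2 : ℕ) + 1 = q
      · have hc1 : ∀ e : PBox s p r, (if (w.2.2 : ℕ) + 1 = q then
            (if (e.2.2 : ℕ) = 0 then a (col0 bv) e * b e (col0 w) else 0) else 0)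
            = (if (e.2.2 : ℕ) = 0 then a (col0 bv) e * b e (col0 w) else 0) :=
          fun e => if_pos hwk
        rw [Finset.sum_congr rfl (fun e _ => hc1 e), ab_sum0 q a b hq2 hmax ha hb, hab,
          projDeg_smul_apply]
        refine if_congr ?_ rfl rfl
        constructor
        · rintro ⟨h1, h2⟩
          obtain ⟨e1, e2, e3⟩ := (pbox_eq_iff _ _).1 h1
          rw [pdeg_col0] at h2
          refine (pbox_eq_iff w bv).2 ⟨e1.symm ▸ rfl, ?_, ?_⟩
          · simp only [col0_row] at e2
            exact e2.symm
          · omega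
        · rintro rfl
          constructor
          · exact (pbox_eq_iff _ _).2 ⟨rfl, rfl, rfl⟩
          · rw [pdeg_col0]; omega
      · rw [Finset.sum_eq_zero (fun e _ => if_neg hwk), if_neg]
        intro hweq
        refine hwk ?_
        rw [hweq]
        omega
    · rw [if_neg hu, Finset.sum_eq_zero]
      intro e _
      rw [if_neg (fun hc => hu hc.1), zero_mul]
  rw [hA, hB, hC, hD, add_zero, zero_add]
  by_cases hw : w = bv
  · rw [if_pos hw, hab, projDeg_smul_apply]
    by_cases hu : u = bh
    · rw [if_pos ⟨hu, hbh⟩, if_pos hu, if_pos hw]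
    · rw [if_neg (fun hc => hu hc.1), if_neg hu]
  · rw [if_neg hw]
    by_cases hu : u = bh
    · rw [if_pos hu, if_neg hw]
    · rw [if_neg hu]

lemma xb_sum (X : PBox s p r → F) (w0 : PBox s p r) :
    (∑ e : PBox s p r, if (e.2.2 : ℕ) + 2 = q then X (col0 e) * b (col0 e) w0 else 0)
      = ∑ e : PBox s p r, X e * b e w0 := by
  have hR : ∑ e : PBox s p r, X e * b e w0
      = ∑ e : PBox s p r, if (e.2.2 : ℕ) = 0 then X e * b e w0 else 0 := by
    refine Finset.sum_congr rfl (fun e _ => ?_)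
    by_cases he : (e.2.2 : ℕ) = 0
    · rw [if_pos he]
    · rw [if_neg he]
      by_cases hbz : b e w0 = 0
      · rw [hbz, mul_zero]
      · exact absurd (b_supp q a b hq2 hmax ha hb e w0 hbz).2.1 he
  rw [hR, Finset.sum_congr rfl (fun e _ =>
      if_congr (show (e.2.2 : ℕ) + 2 = q ↔ (e.2.2 : ℕ) = q - 2 by omega) rfl rfl),
    sum_col_collapse (q - 2) (fun e => X (col0 e) * b (col0 e) w0),
    sum_col_collapse 0 (fun e => X e * b e w0)]
  refine Finset.sum_congr rfl (fun i _ => Finset.sum_congr rfl (fun j _ => ?_))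
  by_cases h1 : q - 2 < p i
  · rw [dif_pos h1, dif_pos (by omega)]
    rfl
  · rw [dif_neg h1]
    by_cases h2 : 0 < p i
    · rw [dif_pos h2]
      by_cases hbz : b ⟨i, (j, ⟨0, h2⟩)⟩ w0 = 0
      · rw [hbz, mul_zero]
      · exfalso
        have hpi : p i = q - 1 := (b_supp q a b hq2 hmax ha hb _ w0 hbz).1
        omega
    · rw [dif_neg h2]

lemma ax_sum (x : Matrix (PBox s p r) (PBox s p r) F)
    (horth : ∀ z : Matrix (PBox s p r) (PBox s p r) F,
      (∀ u w : PBox s p r, pdeg u - pdeg w ≠ 1 → z u w = 0) →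
      EE q a b * z = z * EE q a b →
      Matrix.trace (shiftL p r * (x * z - z * x)) = 0)
    (u0 bh : PBox s p r) (hph : p bh.1 = q) (hq' : q - 1 < p bh.1) (h1' : 1 < p bh.1) :
    (∑ d : PBox s p r, if (d.2.2 : ℕ) = 0 then a u0 d * x d (bx bh 1 h1') else 0)
      = ∑ c : PBox s p r, if (c.2.2 : ℕ) + 2 = q then a u0 (col0 c) * x c (bx bh (q-1) hq') else 0
      := by
  have hcongr : (∑ c : PBox s p r,
      if (c.2.2 : ℕ) + 2 = q then a u0 (col0 c) * x c (bx bh (q-1) hq') else 0)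
      = ∑ c : PBox s p r,
      if (c.2.2 : ℕ) = q - 2 then a u0 (col0 c) * x c (bx bh (q-1) hq') else 0 :=
    Finset.sum_congr rfl (fun c _ => if_congr (by omega) rfl rfl)
  rw [hcongr, sum_col_collapse 0 (fun d => a u0 d * x d (bx bh 1 h1')),
    sum_col_collapse (q - 2) (fun c => a u0 (col0 c) * x c (bx bh (q-1) hq'))]
  refine Finset.sum_congr rfl (fun i _ => Finset.sum_congr rfl (fun j _ => ?_))
  by_cases h1 : q - 2 < p i
  · rw [dif_pos (show 0 < p i by omega), dif_pos h1]
    have ecol : col0 (⟨i, (j, ⟨q - 2, h1⟩)⟩ : PBox s p r) = ⟨i, (j, ⟨0, by omega⟩)⟩ := rfl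
    rw [ecol]
    by_cases haz : a u0 (⟨i, (j, ⟨0, by omega⟩)⟩ : PBox s p r) = 0
    · rw [haz, zero_mul, zero_mul]
    · have hpi : p i = q - 1 := (a_supp q a b hq2 hmax ha hb u0 _ haz).2.2.1
      congr 1
      have hy := yconst q a b hq2 hmax ha hb x horth (q - 2) (le_refl _)
        (⟨i, (j, ⟨q - 2, h1⟩)⟩ : PBox s p r) (bx bh (q-1) hq') hpi
        (by rw [bx_fst]; exact hph) rfl (by rw [bx_col]; omega)
      exact hy.symm
  · rw [dif_neg h1]
    by_cases h2 : 0 < p i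
    · rw [dif_pos h2]
      by_cases haz : a u0 (⟨i, (j, ⟨0, h2⟩)⟩ : PBox s p r) = 0
      · rw [haz, zero_mul]
      · exfalso
        have hpi : p i = q - 1 := (a_supp q a b hq2 hmax ha hb u0 _ haz).2.2.1
        omega
    · rw [dif_neg h2]

lemma eqstar (x : Matrix (PBox s p r) (PBox s p r) F)
    (hx : ∀ u w : PBox s p r, pdeg u - pdeg w ≠ 1 → x u w = 0)
    (horth : ∀ z : Matrix (PBox s p r) (PBox s p r) F,
      (∀ u w : PBox s p r, pdeg u - pdeg w ≠ 1 → z u w = 0) →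
      EE q a b * z = z * EE q a b →
      Matrix.trace (shiftL p r * (x * z - z * x)) = 0)
    (lam : F) (hab : a * b = lam • projDeg p r ((q : ℤ) - 1))
    (bh bv : PBox s p r) (hbh : pdeg bh = (q : ℤ) - 1) (hbv : pdeg bv = 1 - (q : ℤ))
    (hq' : q - 1 < p bh.1) :
    (∑ c : PBox s p r, if (c.2.2 : ℕ) + 2 = q
        then a (col0 bv) (col0 c) * x c (bx bh (q-1) hq') else 0)
      = ∑ c : PBox s p r, x (col0 bv) c * b c bh := by
  obtain ⟨hph, hkh⟩ := K1 q hq2 hmax bh hbh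
  obtain ⟨hpv, hkv⟩ := K2 q hq2 hmax bv hbv
  have h1' : 1 < p bh.1 := by omega
  have h0 := horth (ztM q a b bh bv) (zt_g1 q a b hq2 hmax ha hb bh bv hbh hbv)
    (zt_comm q a b hq2 hmax ha hb lam hab bh bv hbh hbv)
  rw [omega_expand] at h0
  have hsplit : ∀ d c : PBox s p r,
      (shiftL p r * x - x * shiftL p r : Matrix (PBox s p r) (PBox s p r) F) d c
        * ztM q a b bh bv c d
      = (shiftL p r * x - x * shiftL p r : Matrix (PBox s p r) (PBox s p r) F) d c
          * (if d = bv ∧ (c.2.2 : ℕ) + 2 = q then b (col0 c) bh else 0)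
        + (shiftL p r * x - x * shiftL p r : Matrix (PBox s p r) (PBox s p r) F) d c
          * (if c = bh ∧ (d.2.2 : ℕ) = 0 then a (col0 bv) d else 0) :=
    fun d c => by rw [← mul_add]; rfl
  rw [Finset.sum_congr rfl (fun d _ => Finset.sum_congr rfl (fun c _ => hsplit d c)),
    Finset.sum_congr rfl (fun d _ => Finset.sum_add_distrib),
    Finset.sum_add_distrib] at h0
  have hT1 : (∑ d : PBox s p r, ∑ c : PBox s p r,
      (shiftL p r * x - x * shiftL p r : Matrix (PBox s p r) (PBox s p r) F) d c
        * (if d = bv ∧ (c.2.2 : ℕ) + 2 = q then b (col0 c) bh else 0))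
      = ∑ c : PBox s p r, x (col0 bv) c * b c bh := by
    have step1 : ∀ d : PBox s p r, (∑ c : PBox s p r,
        (shiftL p r * x - x * shiftL p r : Matrix (PBox s p r) (PBox s p r) F) d c
          * (if d = bv ∧ (c.2.2 : ℕ) + 2 = q then b (col0 c) bh else 0))
        = if d = bv then (∑ c : PBox s p r,
            (shiftL p r * x - x * shiftL p r : Matrix (PBox s p r) (PBox s p r) F) bv c
              * (if (c.2.2 : ℕ) + 2 = q then b (col0 c) bh else 0)) else 0 := by
      intro d
      by_cases hd : d = bv
      · subst hd
        rw [if_pos rfl]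
        refine Finset.sum_congr rfl (fun c _ => ?_)
        rw [if_congr (and_iff_right rfl) rfl rfl]
      · rw [if_neg hd, Finset.sum_eq_zero]
        intro c _
        rw [if_neg (fun h => hd h.1), mul_zero]
    rw [Finset.sum_congr rfl (fun d _ => step1 d), Fintype.sum_eq_single bv
      (fun d hd => if_neg hd), if_pos rfl]
    have step2 : ∀ c : PBox s p r,
        (shiftL p r * x - x * shiftL p r : Matrix (PBox s p r) (PBox s p r) F) bv c
          * (if (c.2.2 : ℕ) + 2 = q then b (col0 c) bh else 0)
        = if (c.2.2 : ℕ) + 2 = q then x (col0 bv) (col0 c) * b (col0 c) bh else 0 := by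
      intro c
      by_cases hc : (c.2.2 : ℕ) + 2 = q
      · rw [if_pos hc, if_pos hc]
        by_cases hbz : b (col0 c) bh = 0
        · rw [hbz, mul_zero, mul_zero]
        · have hpc : p c.1 = q - 1 := by
            have := (b_supp q a b hq2 hmax ha hb (col0 c) bh hbz).1
            simpa using this
          congr 1
          rw [Matrix.sub_apply, shiftL_mul, mul_shiftL,
            dif_pos (show 1 ≤ (bv.2.2 : ℕ) by omega),
            dif_neg (show ¬ ((c.2.2 : ℕ) + 1 < p c.1) by omega), sub_zero]
          have e1 : bx bv ((bv.2.2 : ℕ) - 1)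
              (Nat.lt_of_le_of_lt (Nat.sub_le _ _) bv.2.2.isLt)
              = bx bv (q - 2) (by omega) := bx_congr bv _ _ _ _ (by omega)
          rw [e1]
          have hw := wconst q a b hq2 hmax ha hb x horth (q - 2) (le_refl _)
            (bx bv (q - 2) (by omega)) c (by rw [bx_fst]; exact hpv) hpc
            (by rw [bx_col]) (by omega)
          rw [hw]
          rfl
      · rw [if_neg hc, if_neg hc, mul_zero]
    rw [Finset.sum_congr rfl (fun c _ => step2 c)]
    exact xb_sum q a b hq2 hmax ha hb (fun e => x (col0 bv) e) bh
  have hT2 : (∑ d : PBox s p r, ∑ c : PBox s p r,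
      (shiftL p r * x - x * shiftL p r : Matrix (PBox s p r) (PBox s p r) F) d c
        * (if c = bh ∧ (d.2.2 : ℕ) = 0 then a (col0 bv) d else 0))
      = -(∑ c : PBox s p r, if (c.2.2 : ℕ) + 2 = q
          then a (col0 bv) (col0 c) * x c (bx bh (q-1) hq') else 0) := by
    have step3 : ∀ d : PBox s p r, (∑ c : PBox s p r,
        (shiftL p r * x - x * shiftL p r : Matrix (PBox s p r) (PBox s p r) F) d c
          * (if c = bh ∧ (d.2.2 : ℕ) = 0 then a (col0 bv) d else 0))
        = (shiftL p r * x - x * shiftL p r : Matrix (PBox s p r) (PBox s p r) F) d bh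
            * (if (d.2.2 : ℕ) = 0 then a (col0 bv) d else 0) := by
      intro d
      rw [Fintype.sum_eq_single bh (fun c hc => by rw [if_neg (fun h => hc h.1), mul_zero]),
        if_congr (and_iff_right rfl) rfl rfl]
    have step4 : ∀ d : PBox s p r,
        (shiftL p r * x - x * shiftL p r : Matrix (PBox s p r) (PBox s p r) F) d bh
          * (if (d.2.2 : ℕ) = 0 then a (col0 bv) d else 0)
        = -(if (d.2.2 : ℕ) = 0 then a (col0 bv) d * x d (bx bh 1 h1') else 0) := by
      intro d
      by_cases hd : (d.2.2 : ℕ) = 0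
      · rw [if_pos hd, if_pos hd]
        rw [Matrix.sub_apply, shiftL_mul, mul_shiftL, dif_neg (by omega),
          dif_pos (show (bh.2.2 : ℕ) + 1 < p bh.1 by omega), zero_sub]
        have e2 : bx bh ((bh.2.2 : ℕ) + 1) (show (bh.2.2 : ℕ) + 1 < p bh.1 by omega)
            = bx bh 1 h1' := bx_congr bh _ _ _ _ (by omega)
        rw [e2]
        ring
      · rw [if_neg hd, if_neg hd, mul_zero, neg_zero]
    rw [Finset.sum_congr rfl (fun d _ => step3 d),
      Finset.sum_congr rfl (fun d _ => step4 d), Finset.sum_neg_distrib,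
      ax_sum q a b hq2 hmax ha hb x horth (col0 bv) bh hph hq' h1']
  rw [hT1, hT2, add_neg_eq_zero] at h0
  exact h0.symm

lemma bwd (lam : F) (hab : a * b = lam • projDeg p r ((q : ℤ) - 1))
    (x : Matrix (PBox s p r) (PBox s p r) F)
    (hx : ∀ u w : PBox s p r, pdeg u - pdeg w ≠ 1 → x u w = 0)
    (horth : ∀ z : Matrix (PBox s p r) (PBox s p r) F,
      (∀ u w : PBox s p r, pdeg u - pdeg w ≠ 1 → z u w = 0) →
      EE q a b * z = z * EE q a b →
      Matrix.trace (shiftL p r * (x * z - z * x)) = 0) :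
    EE q a b * x = x * EE q a b := by
  rw [← sub_eq_zero]
  ext u0 w0
  rw [Matrix.zero_apply]
  by_cases hblock : pdeg u0 = (q : ℤ) - 1 ∧ pdeg w0 = 1 - (q : ℤ)
  · obtain ⟨hpu, hku⟩ := K1 q hq2 hmax u0 hblock.1
    obtain ⟨hpw, hkw⟩ := K2 q hq2 hmax w0 hblock.2
    rw [key q a b hq2 hmax ha hb x u0 w0 hblock.1 hblock.2]
    have hq'' : q - 1 < p u0.1 := by omega
    have hbh' : pdeg (col0 w0) = (q : ℤ) - 1 := by rw [pdeg_col0]; omega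
    have hbv' : pdeg (bx u0 (q - 1) hq'') = 1 - (q : ℤ) := by rw [pdeg_bx]; omega
    have hq3 : q - 1 < p (col0 w0).1 := by simp only [col0_fst]; omega
    have He := eqstar q a b hq2 hmax ha hb x hx horth lam hab (col0 w0) (bx u0 (q - 1) hq'')
      hbh' hbv' hq3
    have e1 : col0 (bx u0 (q - 1) hq'') = u0 := by
      refine (pbox_eq_iff _ _).2 ⟨rfl, rfl, ?_⟩
      simp only [col0_col]
      omega
    have e2 : bx (col0 w0) (q - 1) hq3 = w0 := by
      refine (pbox_eq_iff _ _).2 ⟨rfl, rfl, ?_⟩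
      simp only [bx_col]
      omega
    rw [e1, e2] at He
    rw [He, sub_self]
  · exact E_offblock q a b hq2 hmax ha hb x hx u0 w0 hblock

lemma xt_g1 (bh bv : PBox s p r) (hbh : pdeg bh = (q : ℤ) - 1) (hbv : pdeg bv = 1 - (q : ℤ)) :
    ∀ u w : PBox s p r, pdeg u - pdeg w ≠ 1 → xtM a b bh bv u w = 0 := by
  obtain ⟨hph, hkh⟩ := K1 q hq2 hmax bh hbh
  obtain ⟨hpv, hkv⟩ := K2 q hq2 hmax bv hbv
  intro u w hne
  unfold xtM
  have h1 : (if col0 w = col0 bv ∧ (u.2.2 : ℕ) + 1 = (w.2.2 : ℕ)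
      then b (col0 u) bh else 0) = 0 := by
    by_cases hc : col0 w = col0 bv ∧ (u.2.2 : ℕ) + 1 = (w.2.2 : ℕ)
    · rw [if_pos hc]
      by_contra hbz
      have hpu : p u.1 = q - 1 := by
        have := (b_supp q a b hq2 hmax ha hb _ _ hbz).1
        simpa using this
      have hw1 : w.1 = bv.1 := by
        have h' := congrArg Sigma.fst hc.1
        simpa using h'
      have hpw : p w.1 = q := by rw [hw1]; exact hpv
      refine hne ?_
      rw [pdeg_def, pdeg_def]
      have := hc.2
      omega
    · rw [if_neg hc]
  have h2 : (if col0 u = bh ∧ (u.2.2 : ℕ) = (w.2.2 : ℕ)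
      then a (col0 bv) (col0 w) else 0) = 0 := by
    by_cases hc : col0 u = bh ∧ (u.2.2 : ℕ) = (w.2.2 : ℕ)
    · rw [if_pos hc]
      by_contra haz
      have hpw : p w.1 = q - 1 := by
        have := (a_supp q a b hq2 hmax ha hb _ _ haz).2.2.1
        simpa using this
      have hu1 : u.1 = bh.1 := by
        have h' := congrArg Sigma.fst hc.1
        simpa using h'
      have hpu : p u.1 = q := by rw [hu1]; exact hph
      refine hne ?_
      rw [pdeg_def, pdeg_def]
      have := hc.2
      omega
    · rw [if_neg hc]
  rw [h1, h2, add_zero]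

lemma xt_bracket (bh bv : PBox s p r) (hbh : pdeg bh = (q : ℤ) - 1)
    (hbv : pdeg bv = 1 - (q : ℤ)) (d c : PBox s p r) :
    (shiftL p r * xtM a b bh bv - xtM a b bh bv * shiftL p r
      : Matrix (PBox s p r) (PBox s p r) F) d c
      = (if c = col0 bv ∧ (d.2.2 : ℕ) = 0 then -(b (col0 d) bh) else 0)
        + (if col0 d = bh ∧ (d.2.2 : ℕ) = (c.2.2 : ℕ) + 1 ∧ (c.2.2 : ℕ) + 1 = p c.1
            then a (col0 bv) (col0 c) else 0) := by
  obtain ⟨hph, hkh⟩ := K1 q hq2 hmax bh hbh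
  obtain ⟨hpv, hkv⟩ := K2 q hq2 hmax bv hbv
  have hcbv : ∀ e : PBox s p r, e = col0 bv ↔
      (col0 e = col0 bv ∧ (e.2.2 : ℕ) = 0) := by
    intro e
    constructor
    · rintro rfl
      exact ⟨rfl, rfl⟩
    · rintro ⟨h1, h2⟩
      obtain ⟨e1, e2, _⟩ := (pbox_eq_iff _ _).1 h1
      exact (pbox_eq_iff _ _).2 ⟨e1, e2, by simpa using h2⟩
  rw [Matrix.sub_apply, shiftL_mul, mul_shiftL]
  by_cases hd1 : 1 ≤ (d.2.2 : ℕ)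
  · rw [dif_pos hd1]
    have hA : xtM a b bh bv
        (bx d ((d.2.2 : ℕ) - 1) (Nat.lt_of_le_of_lt (Nat.sub_le _ _) d.2.2.isLt)) c
        = (if col0 c = col0 bv ∧ (d.2.2 : ℕ) = (c.2.2 : ℕ) then b (col0 d) bh else 0)
          + (if col0 d = bh ∧ (d.2.2 : ℕ) = (c.2.2 : ℕ) + 1
              then a (col0 bv) (col0 c) else 0) := by
      unfold xtM
      congr 1
      · refine if_congr (and_congr_right (fun _ => ?_)) rfl rfl
        rw [bx_col]
        omega
      · refine if_congr (and_congr ?_ ?_) rfl rfl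
        · exact Iff.rfl
        · rw [bx_col]
          omega
    by_cases hc1 : (c.2.2 : ℕ) + 1 < p c.1
    · rw [dif_pos hc1, hA]
      have hB : xtM a b bh bv d (bx c ((c.2.2 : ℕ) + 1) hc1)
          = (if col0 c = col0 bv ∧ (d.2.2 : ℕ) = (c.2.2 : ℕ) then b (col0 d) bh else 0)
            + (if col0 d = bh ∧ (d.2.2 : ℕ) = (c.2.2 : ℕ) + 1
                then a (col0 bv) (col0 c) else 0) := by
        unfold xtM
        congr 1
        · refine if_congr (and_congr Iff.rfl ?_) rfl rfl
          rw [bx_col]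
          omega
      rw [hB]
      have hz1 : (if c = col0 bv ∧ (d.2.2 : ℕ) = 0 then -(b (col0 d) bh) else 0) = 0 :=
        if_neg (fun h => absurd h.2 (by omega))
      have hz2 : (if col0 d = bh ∧ (d.2.2 : ℕ) = (c.2.2 : ℕ) + 1 ∧ (c.2.2 : ℕ) + 1 = p c.1
          then a (col0 bv) (col0 c) else 0) = 0 :=
        if_neg (fun h => absurd h.2.2 (by omega))
      rw [hz1, hz2, add_zero, sub_self]
    · rw [dif_neg hc1, hA, sub_zero]
      have hlast : (c.2.2 : ℕ) + 1 = p c.1 := by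
        have := c.2.2.isLt
        omega
      have hbzero : (if col0 c = col0 bv ∧ (d.2.2 : ℕ) = (c.2.2 : ℕ)
          then b (col0 d) bh else 0) = 0 := by
        by_cases h : col0 c = col0 bv ∧ (d.2.2 : ℕ) = (c.2.2 : ℕ)
        · rw [if_pos h]
          by_contra hbz
          have hpd : p d.1 = q - 1 := by
            have := (b_supp q a b hq2 hmax ha hb _ _ hbz).1
            simpa using this
          have hc1' : c.1 = bv.1 := by
            have h' := congrArg Sigma.fst h.1
            simpa using h'
          have hpc : p c.1 = q := by rw [hc1']; exact hpv
          have := d.2.2.isLt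
          omega
        · rw [if_neg h]
      rw [hbzero, zero_add]
      have hz1 : (if c = col0 bv ∧ (d.2.2 : ℕ) = 0 then -(b (col0 d) bh) else 0) = 0 :=
        if_neg (fun h => absurd h.2 (by omega))
      rw [hz1, zero_add]
      refine if_congr (and_congr_right (fun _ => ?_)) rfl rfl
      constructor
      · intro h
        exact ⟨h, hlast⟩
      · intro h
        exact h.1
  · rw [dif_neg hd1]
    have hd0 : (d.2.2 : ℕ) = 0 := by omega
    by_cases hc1 : (c.2.2 : ℕ) + 1 < p c.1
    · rw [dif_pos hc1]
      have hB : xtM a b bh bv d (bx c ((c.2.2 : ℕ) + 1) hc1)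
          = (if col0 c = col0 bv ∧ (d.2.2 : ℕ) = (c.2.2 : ℕ) then b (col0 d) bh else 0)
            + (if col0 d = bh ∧ (d.2.2 : ℕ) = (c.2.2 : ℕ) + 1
                then a (col0 bv) (col0 c) else 0) := by
        unfold xtM
        congr 1
        · refine if_congr (and_congr Iff.rfl ?_) rfl rfl
          rw [bx_col]
          omega
      rw [hB, zero_sub, neg_add]
      have hz2 : (if col0 d = bh ∧ (d.2.2 : ℕ) = (c.2.2 : ℕ) + 1
          then a (col0 bv) (col0 c) else 0) = 0 :=
        if_neg (fun h => absurd h.2 (by omega))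
      have hz2' : (if col0 d = bh ∧ (d.2.2 : ℕ) = (c.2.2 : ℕ) + 1 ∧ (c.2.2 : ℕ) + 1 = p c.1
          then a (col0 bv) (col0 c) else 0) = 0 :=
        if_neg (fun h => absurd h.2.1 (by omega))
      rw [hz2, neg_zero, add_zero, hz2', add_zero]
      by_cases hcc : c = col0 bv
      · have hc0 : (c.2.2 : ℕ) = 0 := ((hcbv c).1 hcc).2
        rw [if_pos (show col0 c = col0 bv ∧ (d.2.2 : ℕ) = (c.2.2 : ℕ) from
          ⟨((hcbv c).1 hcc).1, by omega⟩), if_pos ⟨hcc, hd0⟩]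
      · rw [if_neg (fun h => hcc ((hcbv c).2 ⟨h.1, by omega⟩)), neg_zero,
          if_neg (fun h => hcc h.1)]
    · have hX : ¬ (c = col0 bv ∧ (d.2.2 : ℕ) = 0) := by
        rintro ⟨rfl, -⟩
        have hq0 : (0 : ℕ) + 1 < p (col0 bv).1 := by
          simp only [col0_fst]
          omega
        exact hc1 hq0
      have hz1 : (if c = col0 bv ∧ (d.2.2 : ℕ) = 0 then -(b (col0 d) bh) else 0) = 0 :=
        if_neg hX
      have hz2 : (if col0 d = bh ∧ (d.2.2 : ℕ) = (c.2.2 : ℕ) + 1 ∧ (c.2.2 : ℕ) + 1 = p c.1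
          then a (col0 bv) (col0 c) else 0) = 0 :=
        if_neg (fun h => absurd h.2.1 (by omega))
      rw [dif_neg hc1, sub_zero, hz1, hz2, add_zero]

lemma fwd_orth (bh bv : PBox s p r) (hbh : pdeg bh = (q : ℤ) - 1)
    (hbv : pdeg bv = 1 - (q : ℤ)) (hq' : q - 1 < p bh.1) :
    ∀ z : Matrix (PBox s p r) (PBox s p r) F,
      (∀ u w : PBox s p r, pdeg u - pdeg w ≠ 1 → z u w = 0) →
      EE q a b * z = z * EE q a b →
      Matrix.trace (shiftL p r * (xtM a b bh bv * z - z * xtM a b bh bv)) = 0 := by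
  intro z hz hcomm
  obtain ⟨hph, hkh⟩ := K1 q hq2 hmax bh hbh
  obtain ⟨hpv, hkv⟩ := K2 q hq2 hmax bv hbv
  rw [omega_expand]
  have hsplit : ∀ d c : PBox s p r,
      (shiftL p r * xtM a b bh bv - xtM a b bh bv * shiftL p r
        : Matrix (PBox s p r) (PBox s p r) F) d c * z c d
      = (if c = col0 bv ∧ (d.2.2 : ℕ) = 0 then -(b (col0 d) bh) else 0) * z c d
        + (if col0 d = bh ∧ (d.2.2 : ℕ) = (c.2.2 : ℕ) + 1 ∧ (c.2.2 : ℕ) + 1 = p c.1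
            then a (col0 bv) (col0 c) else 0) * z c d := by
    intro d c
    rw [xt_bracket q a b hq2 hmax ha hb bh bv hbh hbv d c, add_mul]
  rw [Finset.sum_congr rfl (fun d _ => Finset.sum_congr rfl (fun c _ => hsplit d c)),
    Finset.sum_congr rfl (fun d _ => Finset.sum_add_distrib), Finset.sum_add_distrib]
  have hkey := key q a b hq2 hmax ha hb z (col0 bv) (bx bh (q-1) hq')
    (by rw [pdeg_col0]; omega) (by rw [pdeg_bx]; omega)
  rw [hcomm, sub_self, Matrix.zero_apply] at hkey
  have ecolh : col0 (bx bh (q-1) hq') = bh := by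
    refine (pbox_eq_iff _ _).2 ⟨rfl, rfl, ?_⟩
    simp only [col0_col]
    omega
  rw [ecolh] at hkey
  have hV1 : (∑ d : PBox s p r, ∑ c : PBox s p r,
      (if c = col0 bv ∧ (d.2.2 : ℕ) = 0 then -(b (col0 d) bh) else 0) * z c d)
      = -(∑ c : PBox s p r, z (col0 bv) c * b c bh) := by
    have step1 : ∀ d : PBox s p r, (∑ c : PBox s p r,
        (if c = col0 bv ∧ (d.2.2 : ℕ) = 0 then -(b (col0 d) bh) else 0) * z c d)
        = -(if (d.2.2 : ℕ) = 0 then b (col0 d) bh * z (col0 bv) d else 0) := by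
      intro d
      rw [Fintype.sum_eq_single (col0 bv)
        (fun c hc => by rw [if_neg (fun h => hc h.1), zero_mul])]
      by_cases hd : (d.2.2 : ℕ) = 0
      · rw [if_pos ⟨rfl, hd⟩, if_pos hd, neg_mul]
      · rw [if_neg (fun h => hd h.2), zero_mul, if_neg hd, neg_zero]
    rw [Finset.sum_congr rfl (fun d _ => step1 d), Finset.sum_neg_distrib, neg_inj]
    have hins : ∀ c : PBox s p r, z (col0 bv) c * b c bh
        = (if (c.2.2 : ℕ) = 0 then b (col0 c) bh * z (col0 bv) c else 0) := by
      intro c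
      by_cases hc : (c.2.2 : ℕ) = 0
      · have e : col0 c = c := bx_self c 0 (box_pos c) hc
        rw [if_pos hc, e, mul_comm]
      · rw [if_neg hc]
        by_cases hbz : b c bh = 0
        · rw [hbz, mul_zero]
        · exact absurd (b_supp q a b hq2 hmax ha hb c bh hbz).2.1 hc
    rw [Finset.sum_congr rfl (fun c _ => hins c)]
  have hV2 : (∑ d : PBox s p r, ∑ c : PBox s p r,
      (if col0 d = bh ∧ (d.2.2 : ℕ) = (c.2.2 : ℕ) + 1 ∧ (c.2.2 : ℕ) + 1 = p c.1
          then a (col0 bv) (col0 c) else 0) * z c d)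
      = ∑ c : PBox s p r, if (c.2.2 : ℕ) + 2 = q
          then a (col0 bv) (col0 c) * z c (bx bh (q-1) hq') else 0 := by
    rw [Finset.sum_comm]
    refine Finset.sum_congr rfl (fun c _ => ?_)
    by_cases haz : a (col0 bv) (col0 c) = 0
    · rw [Finset.sum_eq_zero (fun d _ => by rw [haz, ite_self, zero_mul]), haz, zero_mul,
        ite_self]
    · have hpc : p c.1 = q - 1 := by
        have := (a_supp q a b hq2 hmax ha hb (col0 bv) (col0 c) haz).2.2.1
        simpa using this
      by_cases hlast : (c.2.2 : ℕ) + 1 = p c.1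
      · have hck : (c.2.2 : ℕ) + 2 = q := by omega
        rw [if_pos hck]
        have hpt : ∀ d : PBox s p r,
            (if col0 d = bh ∧ (d.2.2 : ℕ) = (c.2.2 : ℕ) + 1 ∧ (c.2.2 : ℕ) + 1 = p c.1
              then a (col0 bv) (col0 c) else 0) * z c d
            = (if d.1 = bh.1 ∧ (d.2.1 : ℕ) = (bh.2.1 : ℕ) ∧ (d.2.2 : ℕ) = (c.2.2 : ℕ) + 1
              then a (col0 bv) (col0 c) * z c d else 0) := by
          intro d
          by_cases hcd : col0 d = bh ∧ (d.2.2 : ℕ) = (c.2.2 : ℕ) + 1 ∧ (c.2.2 : ℕ) + 1 = p c.1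
          · obtain ⟨e1, e2, _⟩ := (pbox_eq_iff _ _).1 hcd.1
            rw [if_pos hcd, if_pos ⟨by simpa using e1, by simpa using e2, hcd.2.1⟩]
          · rw [if_neg hcd, zero_mul, if_neg]
            rintro ⟨h1, h2, h3⟩
            refine hcd ⟨(pbox_eq_iff _ _).2 ⟨by simpa using h1, by simpa using h2, ?_⟩, h3, hlast⟩
            simp only [col0_col]
            omega
        have hbnd : (c.2.2 : ℕ) + 1 < p bh.1 := by omega
        rw [Finset.sum_congr rfl (fun d _ => hpt d),
          sum_collapse (fun d => a (col0 bv) (col0 c) * z c d) bh ((c.2.2 : ℕ) + 1) hbnd]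
        have e3 : bx bh ((c.2.2 : ℕ) + 1) hbnd = bx bh (q-1) hq' :=
          bx_congr bh _ _ _ _ (by omega)
        rw [e3]
      · rw [Finset.sum_eq_zero (fun d _ => by rw [if_neg (fun h => hlast h.2.2), zero_mul]),
          if_neg (by omega)]
  rw [hV1, hV2]
  linear_combination -hkey

lemma fwd
    (Hco : ∀ x : Matrix (PBox s p r) (PBox s p r) F,
      (∀ u w : PBox s p r, pdeg u - pdeg w ≠ 1 → x u w = 0) →
      (∀ z : Matrix (PBox s p r) (PBox s p r) F,
        (∀ u w : PBox s p r, pdeg u - pdeg w ≠ 1 → z u w = 0) →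
        EE q a b * z = z * EE q a b →
        Matrix.trace (shiftL p r * (x * z - z * x)) = 0) →
      EE q a b * x = x * EE q a b) :
    ∃ lam : F, a * b = lam • projDeg p r ((q : ℤ) - 1) := by
  have hRel : ∀ β wv bh bv : PBox s p r, pdeg β = (q : ℤ) - 1 → pdeg wv = 1 - (q : ℤ) →
      pdeg bh = (q : ℤ) - 1 → pdeg bv = 1 - (q : ℤ) →
      (if col0 wv = col0 bv then (a * b) β bh else 0)
        = (if col0 β = bh then (a * b) (col0 bv) (col0 wv) else 0) := by
    intro β wv bh bv hβ hwv hbh hbv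
    obtain ⟨hpβ, hkβ⟩ := K1 q hq2 hmax β hβ
    obtain ⟨hpw, hkw⟩ := K2 q hq2 hmax wv hwv
    obtain ⟨hph, hkh⟩ := K1 q hq2 hmax bh hbh
    obtain ⟨hpv, hkv⟩ := K2 q hq2 hmax bv hbv
    have hq' : q - 1 < p bh.1 := by omega
    have hcomm := Hco (xtM a b bh bv) (xt_g1 q a b hq2 hmax ha hb bh bv hbh hbv)
      (fwd_orth q a b hq2 hmax ha hb bh bv hbh hbv hq')
    have hkey := key q a b hq2 hmax ha hb (xtM a b bh bv) β wv hβ hwv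
    rw [hcomm, sub_self, Matrix.zero_apply] at hkey
    have hS1 : (∑ c : PBox s p r, if (c.2.2 : ℕ) + 2 = q
        then a β (col0 c) * xtM a b bh bv c wv else 0)
        = (if col0 wv = col0 bv then (a * b) β bh else 0) := by
      by_cases hcw : col0 wv = col0 bv
      · rw [if_pos hcw, ← ab_sum1 q a b hq2 hmax ha hb β bh]
        refine Finset.sum_congr rfl (fun c _ => ?_)
        by_cases hck : (c.2.2 : ℕ) + 2 = q
        · rw [if_pos hck, if_pos hck]
          congr 1
          unfold xtM
          rw [if_pos ⟨hcw, by omega⟩, if_neg (fun h => absurd h.2 (by omega)), add_zero]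
        · rw [if_neg hck, if_neg hck]
      · rw [if_neg hcw, Finset.sum_eq_zero]
        intro c _
        by_cases hck : (c.2.2 : ℕ) + 2 = q
        · rw [if_pos hck]
          have hxt : xtM a b bh bv c wv = 0 := by
            unfold xtM
            rw [if_neg (fun h => hcw h.1), if_neg (fun h => absurd h.2 (by omega)), add_zero]
          rw [hxt, mul_zero]
        · rw [if_neg hck]
    have hS2 : (∑ c : PBox s p r, xtM a b bh bv β c * b c (col0 wv))
        = (if col0 β = bh then (a * b) (col0 bv) (col0 wv) else 0) := by
      by_cases hcβ : col0 β = bh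
      · rw [if_pos hcβ, ← ab_sum0 q a b hq2 hmax ha hb (col0 bv) (col0 wv)]
        refine Finset.sum_congr rfl (fun c _ => ?_)
        by_cases hck : (c.2.2 : ℕ) = 0
        · rw [if_pos hck]
          congr 1
          unfold xtM
          rw [if_neg (fun h => absurd h.2 (by omega)), zero_add, if_pos ⟨hcβ, by omega⟩]
          have e : col0 c = c := bx_self c 0 (box_pos c) hck
          rw [e]
        · rw [if_neg hck]
          by_cases hbz : b c (col0 wv) = 0
          · rw [hbz, mul_zero]
          · exact absurd (b_supp q a b hq2 hmax ha hb c (col0 wv) hbz).2.1 hck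
      · rw [if_neg hcβ, Finset.sum_eq_zero]
        intro c _
        by_cases hbz : b c (col0 wv) = 0
        · rw [hbz, mul_zero]
        · have hck : (c.2.2 : ℕ) = 0 := (b_supp q a b hq2 hmax ha hb c (col0 wv) hbz).2.1
          have hxt : xtM a b bh bv β c = 0 := by
            unfold xtM
            rw [if_neg (fun h => absurd h.2 (by omega)), if_neg (fun h => hcβ h.1), add_zero]
          rw [hxt, zero_mul]
    rw [hS1, hS2] at hkey
    exact sub_eq_zero.mp hkey.symm
  by_cases hex : ∃ τ : PBox s p r, pdeg τ = (q : ℤ) - 1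
  · obtain ⟨τ, hτ⟩ := hex
    obtain ⟨hpτ, hkτ⟩ := K1 q hq2 hmax τ hτ
    have hqτ : q - 1 < p τ.1 := by omega
    refine ⟨(a * b) τ τ, ?_⟩
    ext u w
    rw [projDeg_smul_apply]
    by_cases hu : pdeg u = (q : ℤ) - 1
    · by_cases hw : pdeg w = (q : ℤ) - 1
      · have hrel := hRel u (bx τ (q-1) hqτ) w (bx τ (q-1) hqτ) hu
          (by rw [pdeg_bx]; omega) hw (by rw [pdeg_bx]; omega)
        rw [if_pos rfl] at hrel
        have ecol : col0 (bx τ (q-1) hqτ) = τ := by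
          refine (pbox_eq_iff _ _).2 ⟨rfl, rfl, ?_⟩
          simp only [col0_col]
          omega
        rw [ecol] at hrel
        rw [hrel]
        obtain ⟨hpu, hku⟩ := K1 q hq2 hmax u hu
        have eu : col0 u = u := bx_self u 0 (box_pos u) hku
        refine if_congr ?_ rfl rfl
        constructor
        · intro h
          exact ⟨eu.symm.trans h, hw⟩
        · rintro ⟨rfl, -⟩
          exact eu
      · rw [if_neg (fun h => hw h.2), Matrix.mul_apply, Finset.sum_eq_zero]
        intro e _
        by_cases hbz : b e w = 0
        · rw [hbz, mul_zero]
        · exact absurd (hb e w hbz).2 hw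
    · rw [if_neg (fun h => hu (by rw [h.1]; exact h.2)), Matrix.mul_apply, Finset.sum_eq_zero]
      intro e _
      by_cases haz : a u e = 0
      · rw [haz, zero_mul]
      · exact absurd (ha u e haz).1 hu
  · refine ⟨0, ?_⟩
    rw [zero_smul]
    ext u w
    rw [Matrix.zero_apply, Matrix.mul_apply, Finset.sum_eq_zero]
    intro e _
    by_cases haz : a u e = 0
    · rw [haz, zero_mul]
    · exact absurd ⟨u, (ha u e haz).1⟩ hex

end Main2


end CoisoAux

/-- Let `f ∈ gl_N` be nilpotent of depth `d = 2D` (`D = p₁ − 1`),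
and let `E = a (fᵀ)^{D-1} + b (fᵀ)^D ∈ g_{d-1}` with `a ∈ Hom(V[D-1], V[D])` and
`b ∈ Hom(V[D], V[D-1])`.  Then the centralizer of `E` in `g_1` is coisotropic with
respect to `ω(x,y) = tr (f [x,y])` if and only if `a b = λ · 1_{V[D]}` for some
scalar `λ`. -/


theorem coisotropic_iff_ab_scalar
    {s : ℕ} (hs : 0 < s) (p r : Fin s → ℕ) (hp : StrictAnti p)
    (hp1 : 2 ≤ p ⟨0, hs⟩)
    (a b : Matrix (PBox s p r) (PBox s p r) F)
    (ha : ∀ b' b0 : PBox s p r, a b' b0 ≠ 0 →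
      pdeg b' = ((p ⟨0, hs⟩ : ℤ) - 1) ∧ pdeg b0 = ((p ⟨0, hs⟩ : ℤ) - 1) - 1)
    (hb : ∀ b' b0 : PBox s p r, b b' b0 ≠ 0 →
      pdeg b' = ((p ⟨0, hs⟩ : ℤ) - 1) - 1 ∧ pdeg b0 = ((p ⟨0, hs⟩ : ℤ) - 1)) :
    (∀ x : Matrix (PBox s p r) (PBox s p r) F,
        (∀ b' b0 : PBox s p r, pdeg b' - pdeg b0 ≠ 1 → x b' b0 = 0) →
        (∀ z : Matrix (PBox s p r) (PBox s p r) F,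
          (∀ b' b0 : PBox s p r, pdeg b' - pdeg b0 ≠ 1 → z b' b0 = 0) →
          (a * shiftR p r ^ (p ⟨0, hs⟩ - 2) + b * shiftR p r ^ (p ⟨0, hs⟩ - 1)) * z =
            z * (a * shiftR p r ^ (p ⟨0, hs⟩ - 2) + b * shiftR p r ^ (p ⟨0, hs⟩ - 1)) →
          Matrix.trace (shiftL p r * (x * z - z * x)) = 0) →
        (a * shiftR p r ^ (p ⟨0, hs⟩ - 2) + b * shiftR p r ^ (p ⟨0, hs⟩ - 1)) * x =
          x * (a * shiftR p r ^ (p ⟨0, hs⟩ - 2) + b * shiftR p r ^ (p ⟨0, hs⟩ - 1)))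
      ↔ ∃ lam : F, a * b = lam • projDeg p r ((p ⟨0, hs⟩ : ℤ) - 1) := by
  have hmax : ∀ i : Fin s, p i ≤ p ⟨0, hs⟩ := by
    intro i
    exact hp.antitone (by simp [Fin.le_def])
  constructor
  · intro H
    exact CoisoAux.fwd (p ⟨0, hs⟩) a b hp1 hmax ha hb H
  · rintro ⟨lam, hab⟩ x hx horth
    exact CoisoAux.bwd (p ⟨0, hs⟩) a b hp1 hmax ha hb lam hab x hx horth
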